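/- Let Σ ∈ ℝ^{d×d} be symmetric positive definite. For every symmetric positive semidefinite S ∈ ℝ^{d×d}, one has B(S) = Tr(S + Σ − 2(Σ^{1/2} S Σ^{1/2})^{1/2}) ≥ 0, and B(S) = 0 if and only if S = Σ. In particular, when ρ = 0 the only symmetric positive semidefinite matrix with B(S) ≤ ρ² is S = Σ. -/

import Mathlib

open Matrix

-- `msqrt M` is the unique symmetric PSD square root of a symmetric PSD matrix `M` (else `0`).
open Classical in
noncomputable def msqrt {ι : Type*} [Fintype ι] [DecidableEq ι] (M : Matrix ι ι ℝ) : Matrix ι ι ℝ :=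
  if h : M.PosSemidef then
    (h.1.eigenvectorUnitary : Matrix ι ι ℝ) * diagonal ((RCLike.ofReal : ℝ → ℝ) ∘ Real.sqrt ∘ h.1.eigenvalues) *
      (star h.1.eigenvectorUnitary : Matrix ι ι ℝ) else 0

/-- `Bdist Sg S = Tr(S + Σ − 2(Σ^{1/2} S Σ^{1/2})^{1/2})`. -/
noncomputable def Bdist {ι : Type*} [Fintype ι] [DecidableEq ι] (Sg S : Matrix ι ι ℝ) : ℝ :=
  (S + Sg - (2:ℝ) • msqrt (msqrt Sg * S * msqrt Sg)).trace

/-- The objective `f(S) = Tr(S_xx − S_xy S_yy⁻¹ S_yx)` of the convex reformulation. -/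
noncomputable def fobj {n m : ℕ} (S : Matrix (Fin n ⊕ Fin m) (Fin n ⊕ Fin m) ℝ) : ℝ :=
  (S.toBlocks₁₁ - S.toBlocks₁₂ * S.toBlocks₂₂⁻¹ * S.toBlocks₂₁).trace

/-- The gradient matrix `D(G) = [I, −G]ᵀ[I, −G] = [[I, −G], [−Gᵀ, GᵀG]]`. -/
def Dmat {n m : ℕ} (G : Matrix (Fin n) (Fin m) ℝ) :
    Matrix (Fin n ⊕ Fin m) (Fin n ⊕ Fin m) ℝ :=
  Matrix.fromBlocks 1 (-G) (-Gᵀ) (Gᵀ * G)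


open scoped MatrixOrder in
noncomputable def psqrt {ι : Type*} [Fintype ι] [DecidableEq ι] (M : Matrix ι ι ℝ) :
    Matrix ι ι ℝ :=
  CFC.sqrt M

open scoped MatrixOrder in
lemma msqrt_eq_sqrt' {ι : Type*} [Fintype ι] [DecidableEq ι] (M : Matrix ι ι ℝ) (h : M.PosSemidef) :
    msqrt M = psqrt M := by
  have h0 : (0 : Matrix ι ι ℝ) ≤ M := Matrix.nonneg_iff_posSemidef.2 h
  rw [msqrt, dif_pos h, psqrt, CFC.sqrt_eq_cfc, cfc_nnreal_eq_real _ M, h.1.cfc_eq]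
  simp [IsHermitian.cfc, Unitary.conjStarAlgAut_apply, Function.comp_def,
    max_eq_left (h.eigenvalues_nonneg _)]

open scoped MatrixOrder in
lemma psd_sqrt' {ι : Type*} [Fintype ι] [DecidableEq ι] {M : Matrix ι ι ℝ} (_h : M.PosSemidef) :
    (psqrt M).PosSemidef :=
  Matrix.nonneg_iff_posSemidef.1 (CFC.sqrt_nonneg M)

open scoped MatrixOrder in
lemma sqrt_mul_self' {ι : Type*} [Fintype ι] [DecidableEq ι] {M : Matrix ι ι ℝ} (h : M.PosSemidef) :
    psqrt M * psqrt M = M :=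
  CFC.sqrt_mul_sqrt_self M (Matrix.nonneg_iff_posSemidef.2 h)

open scoped MatrixOrder in
lemma eq_sqrt_of_sq_eq' {ι : Type*} [Fintype ι] [DecidableEq ι] {S M : Matrix ι ι ℝ} (hS : S.PosSemidef)
    (hM : M.PosSemidef) (h : S ^ 2 = M) : S = psqrt M :=
  ((CFC.sqrt_eq_iff M S (Matrix.nonneg_iff_posSemidef.2 hM) (Matrix.nonneg_iff_posSemidef.2 hS)).2
    (by rw [← h, sq])).symm

/-- For every symmetric PSD `S`, `B(S) ≥ 0`, with `B(S) = 0` iff `S = Σ`; in particular, when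
`ρ = 0` the only symmetric PSD matrix with `B(S) ≤ ρ²` is `S = Σ`. -/
theorem stmt16 {d : ℕ} [NeZero d] (Sg : Matrix (Fin d) (Fin d) ℝ) (hSg : Sg.PosDef)
    (S : Matrix (Fin d) (Fin d) ℝ) (hS : S.PosSemidef) :
    0 ≤ Bdist Sg S ∧ (Bdist Sg S = 0 ↔ S = Sg) ∧ (Bdist Sg S ≤ 0 → S = Sg) := by
  classical
  have hSgps : Sg.PosSemidef := hSg.posSemidef
  set A : Matrix (Fin d) (Fin d) ℝ := msqrt Sg with hAdef
  have hAeq : A = psqrt Sg := by rw [hAdef]; exact msqrt_eq_sqrt' Sg hSgps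
  have hA : A.PosSemidef := by rw [hAeq]; exact psd_sqrt' hSgps
  have hAA : A * A = Sg := by rw [hAeq]; exact sqrt_mul_self' hSgps
  have hAH : Aᴴ = A := hA.1
  have hdetA : IsUnit A.det := by
    refine isUnit_iff_ne_zero.2 fun h => ?_
    have h2 : A.det * A.det = Sg.det := by rw [← det_mul, hAA]
    rw [h, mul_zero] at h2
    exact hSg.det_pos.ne' h2.symm
  have hAinv : A * A⁻¹ = 1 := mul_nonsing_inv A hdetA
  have hinvA : A⁻¹ * A = 1 := nonsing_inv_mul A hdetA
  set M : Matrix (Fin d) (Fin d) ℝ := A * S * A with hMdef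
  have hM : M.PosSemidef := by
    have := hS.mul_mul_conjTranspose_same A
    rwa [hAH] at this
  set P : Matrix (Fin d) (Fin d) ℝ := msqrt M with hPdef
  have hPeq : P = psqrt M := by rw [hPdef]; exact msqrt_eq_sqrt' M hM
  have hP : P.PosSemidef := by rw [hPeq]; exact psd_sqrt' hM
  have hPP : P * P = M := by rw [hPeq]; exact sqrt_mul_self' hM
  have hPH : Pᴴ = P := hP.1
  set T : Matrix (Fin d) (Fin d) ℝ := A⁻¹ * P * A⁻¹ with hTdef
  have hinvH : (A⁻¹)ᴴ = A⁻¹ := by rw [conjTranspose_nonsing_inv, hAH]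
  have hTH : Tᴴ = T := by
    rw [hTdef, conjTranspose_mul, conjTranspose_mul, hinvH, hPH, Matrix.mul_assoc]
  have hATA : A * T * A = P := by
    rw [hTdef]
    simp only [Matrix.mul_assoc, hinvA, Matrix.mul_one]
    rw [← Matrix.mul_assoc, hAinv, Matrix.one_mul]
  have red : ∀ X : Matrix (Fin d) (Fin d) ℝ, A⁻¹ * (A * X * A) * A⁻¹ = X := by
    intro X
    simp only [← Matrix.mul_assoc]
    rw [hinvA, Matrix.one_mul, Matrix.mul_assoc, hAinv, Matrix.mul_one]
  have cancel : ∀ X Y : Matrix (Fin d) (Fin d) ℝ, A * X * A = A * Y * A → X = Y := by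
    intro X Y h
    rw [← red X, ← red Y, h]
  have hSeq : S = T * Sg * T := by
    refine cancel S (T * Sg * T) ?_
    have h2 : A * (T * Sg * T) * A = (A * T * A) * (A * T * A) := by
      rw [← hAA]; simp only [Matrix.mul_assoc]
    rw [h2, hATA, hPP, hMdef]
  set C : Matrix (Fin d) (Fin d) ℝ := T * A - A with hCdef
  have hCC : C * Cᴴ = S + Sg - (T * Sg + Sg * T) := by
    rw [hCdef, conjTranspose_sub, conjTranspose_mul, hAH, hTH]
    have e1 : T * A * (A * T) = S := by
      rw [Matrix.mul_assoc, ← Matrix.mul_assoc A A T, hAA, ← Matrix.mul_assoc, hSeq]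
    have e2 : T * A * A = T * Sg := by rw [Matrix.mul_assoc, hAA]
    have e3 : A * (A * T) = Sg * T := by rw [← Matrix.mul_assoc, hAA]
    rw [Matrix.sub_mul, Matrix.mul_sub, Matrix.mul_sub, e1, e2, e3, hAA]
    abel
  have htraceP : P.trace = (T * Sg).trace :=
    calc P.trace = (A * T * A).trace := by rw [hATA]
    _ = (A * (A * T)).trace := trace_mul_comm _ _
    _ = ((A * A) * T).trace := by rw [← Matrix.mul_assoc]
    _ = (T * Sg).trace := by rw [hAA, trace_mul_comm]
  have hB : Bdist Sg S = (C * Cᴴ).trace := by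
    rw [Bdist, ← hAdef, ← hMdef, ← hPdef, hCC]
    rw [trace_sub, trace_sub, trace_add, trace_add, trace_smul, htraceP,
      trace_mul_comm Sg T, smul_eq_mul]
    ring
  have hsq : (C * Cᴴ).trace = ∑ i, ∑ j, (C i j)^2 := by
    simp [Matrix.trace, Matrix.mul_apply, Matrix.diag, sq, mul_comm]
  have hnonneg : 0 ≤ Bdist Sg S := by
    rw [hB, hsq]
    exact Finset.sum_nonneg fun i _ => Finset.sum_nonneg fun j _ => sq_nonneg _
  have hzero : Bdist Sg S = 0 → S = Sg := by
    intro h0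
    have hC0 : C = 0 := by
      rw [hB, hsq] at h0
      ext i j
      have h1 : ∀ i ∈ Finset.univ, (0:ℝ) ≤ ∑ j, (C i j)^2 :=
        fun i _ => Finset.sum_nonneg fun j _ => sq_nonneg _
      have h2 := (Finset.sum_eq_zero_iff_of_nonneg h1).1 h0 i (Finset.mem_univ i)
      have h3 := (Finset.sum_eq_zero_iff_of_nonneg
        (fun j _ => sq_nonneg (C i j))).1 h2 j (Finset.mem_univ j)
      simpa [sq] using pow_eq_zero_iff (n := 2) (by norm_num) |>.1 h3
    have hTA : T * A = A := by
      have := sub_eq_zero.1 (hCdef ▸ hC0)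
      exact this
    have hT1 : T = 1 := by
      have := congrArg (fun Z => Z * A⁻¹) hTA
      simpa only [Matrix.mul_assoc, hAinv, Matrix.mul_one] using this
    rw [hSeq, hT1, Matrix.one_mul, Matrix.mul_one]
  have hrev : S = Sg → Bdist Sg S = 0 := by
    intro h
    subst h
    have hMsq : M = S ^ 2 := by rw [hMdef, ← hAA, pow_two]; simp only [Matrix.mul_assoc]
    have hPS : P = S := by
      rw [hPeq]
      exact (eq_sqrt_of_sq_eq' hS hM hMsq.symm).symm
    rw [Bdist, ← hAdef, ← hMdef, ← hPdef, hPS]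
    have : S + S - (2:ℝ) • S = 0 := by
      rw [two_smul]; abel
    rw [this, trace_zero]
  exact ⟨hnonneg, ⟨hzero, hrev⟩, fun h => hzero (le_antisymm h hnonneg)⟩
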